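/- arXiv:2102.04994 — 3 statements merged into one kernel-verified Lean document; each statement's English description precedes it below -/
import Mathlib

section
/- Let G be a graph with a bipartition (A, B) (every edge of G has one end in A and one end in B), such that every vertex in B has a neighbour in A. Let Γ, Δ, d > 0 be real numbers with d < 1, such that every vertex in A has at most Δ neighbours in B. Then either (i) for some integer t ≥ 1 there is a (t, Γ·t^{−1/d})-comb in (A, B), or (ii) |B| ≤ (3^{d+1} / (3/2 − (3/2)^d)) · Γ^d · Δ^{1−d}. -/
open SimpleGraph

/-- The independence (stable set) number of a graph: the clique number of the complement. -/
noncomputable def alphaNum {V : Type*} (G : SimpleGraph V) : ℕ := Gᶜ.cliqueNum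

/-- The clique number of a graph. -/
noncomputable def omegaNum {V : Type*} (G : SimpleGraph V) : ℕ := G.cliqueNum

/-- κ(G) = α(G)·ω(G). -/
noncomputable def kappaNum {V : Type*} (G : SimpleGraph V) : ℕ := alphaNum G * omegaNum G

/-- A `(t, k)`-comb in `G`: distinct vertices `a i`, pairwise disjoint sets `B i` avoiding
all the `a j`'s, with `a i` adjacent to all of `B i`, `a i` with no neighbour in `B j` for
`j ≠ i`, and each `|B i| ≥ k`. -/
def IsComb {V : Type*} (G : SimpleGraph V) {t : ℕ} (k : ℝ)
    (a : Fin t → V) (B : Fin t → Finset V) : Prop :=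
  Function.Injective a ∧
  Pairwise (Function.onFun Disjoint B) ∧
  (∀ i j, a i ∉ B j) ∧
  (∀ i, ∀ v ∈ B i, G.Adj (a i) v) ∧
  (∀ i j, i ≠ j → ∀ v ∈ B j, ¬ G.Adj (a i) v) ∧
  (∀ i, k ≤ ((B i).card : ℝ))

section Aux

variable {V : Type*} [Fintype V] [DecidableEq V]

/-- Auxiliary relation on pairs (vertex, set) used to build combs. -/
def combRel (G : SimpleGraph V) : V × Finset V → V × Finset V → Prop := fun p q =>
  p.1 ≠ q.1 ∧ Disjoint p.2 q.2 ∧ (∀ v ∈ q.2, ¬ G.Adj p.1 v) ∧ (∀ v ∈ p.2, ¬ G.Adj q.1 v)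

lemma lsum_add {α : Type*} (L : List α) (f g : α → ℝ) :
    (L.map (fun x => f x + g x)).sum = (L.map f).sum + (L.map g).sum := by
  induction L with
  | nil => simp
  | cons x L ih => simp only [List.map_cons, List.sum_cons, ih]; ring

lemma steal_le (G : SimpleGraph V) [DecidableRel G.Adj]
    (L : List (V × Finset V)) (D : Finset V) :
    ((D.filter (fun v => ∃ p ∈ L, G.Adj p.1 v)).card : ℝ)
      ≤ (L.map (fun p => ((D.filter (G.Adj p.1)).card : ℝ))).sum := by
  induction L with
  | nil => simp
  | cons q L ih =>
    have hsub : D.filter (fun v => ∃ p ∈ q :: L, G.Adj p.1 v)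
        ⊆ D.filter (G.Adj q.1) ∪ D.filter (fun v => ∃ p ∈ L, G.Adj p.1 v) := by
      intro v hv
      simp only [Finset.mem_filter, List.mem_cons, Finset.mem_union] at hv ⊢
      obtain ⟨hvD, p, hp | hp, hadj⟩ := hv
      · subst hp; exact Or.inl ⟨hvD, hadj⟩
      · exact Or.inr ⟨hvD, p, hp, hadj⟩
    have h1 := Finset.card_le_card hsub
    have h2 := Finset.card_union_le (D.filter (G.Adj q.1))
      (D.filter (fun v => ∃ p ∈ L, G.Adj p.1 v))
    have h3 : ((D.filter (fun v => ∃ p ∈ q :: L, G.Adj p.1 v)).card : ℝ)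
        ≤ ((D.filter (G.Adj q.1)).card : ℝ)
          + ((D.filter (fun v => ∃ p ∈ L, G.Adj p.1 v)).card : ℝ) := by
      exact_mod_cast le_trans h1 h2
    simp only [List.map_cons, List.sum_cons]
    linarith

/-- The band extraction lemma: greedily remove neighbourhoods of vertices of `A` of
degree more than `2K/3` into the current set, pruning and selecting so as to keep a
comb-candidate list `C`, a count `r` of rejected sets, the union `Rej` of rejected sets,
and a leftover `F''` where all degrees are at most `2K/3`. -/
lemma band (G : SimpleGraph V) [DecidableRel G.Adj] (A : Finset V) (K : ℝ) (hK : 0 < K) :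
    ∀ N (F : Finset V), F.card ≤ N →
    (∀ a ∈ A, ((F.filter (G.Adj a)).card : ℝ) ≤ K) →
    ∃ (C : List (V × Finset V)) (r : ℕ) (Rej F'' : Finset V),
      F'' ⊆ F ∧ Rej ⊆ F ∧
      (∀ a ∈ A, ((F''.filter (G.Adj a)).card : ℝ) ≤ 2*K/3) ∧
      ((F.card : ℝ) ≤ ((r : ℝ) + C.length) * K + F''.card) ∧
      (∀ p ∈ C, p.1 ∈ A ∧ p.2 ⊆ F ∧ (∀ v ∈ p.2, G.Adj p.1 v) ∧ K/3 < (p.2.card : ℝ)) ∧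
      List.Pairwise (combRel G) C ∧
      (∀ p ∈ C, ((Rej.filter (G.Adj p.1)).card : ℝ) + 2*K/3
          < ((F.filter (G.Adj p.1)).card : ℝ)) ∧
      ((r : ℝ) * (K/3) ≤ (C.map (fun p => ((Rej.filter (G.Adj p.1)).card : ℝ))).sum) := by
  intro N
  induction N with
  | zero =>
    intro F hcard hdegF
    have hF : F = ∅ := Finset.card_eq_zero.mp (Nat.le_zero.mp hcard)
    subst hF
    refine ⟨[], 0, ∅, ∅, Finset.Subset.refl _, Finset.Subset.refl _, ?_, by simp, by simp,
      List.Pairwise.nil, by simp, by simp⟩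
    intro a _
    simp only [Finset.filter_empty, Finset.card_empty, Nat.cast_zero]
    linarith
  | succ N ih =>
    intro F hcard hdegF
    by_cases hex : ∃ a ∈ A, 2*K/3 < ((F.filter (G.Adj a)).card : ℝ)
    · obtain ⟨a, haA, haD⟩ := hex
      set D := F.filter (G.Adj a) with hDdef
      have hDsubF : D ⊆ F := Finset.filter_subset _ _
      have hDK : (D.card : ℝ) ≤ K := hdegF a haA
      have hDpos : 1 ≤ D.card := by
        have h0 : (0:ℝ) < (D.card : ℝ) := lt_of_le_of_lt (by positivity) haD
        exact_mod_cast Nat.one_le_iff_ne_zero.mpr (by exact_mod_cast h0.ne')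
      have hsplit : (F \ D).card + D.card = F.card :=
        Finset.card_sdiff_add_card_eq_card hDsubF
      have hsplitR : ((F \ D).card : ℝ) + (D.card : ℝ) = (F.card : ℝ) := by
        exact_mod_cast hsplit
      have hFcard' : (F \ D).card ≤ N := by omega
      have hdegF' : ∀ b ∈ A, (((F \ D).filter (G.Adj b)).card : ℝ) ≤ K := by
        intro b hb
        refine le_trans ?_ (hdegF b hb)
        exact_mod_cast Finset.card_le_card
          (Finset.filter_subset_filter _ Finset.sdiff_subset)
      obtain ⟨C', r', Rej', F'', hF''sub, hRejsub, hdegF'', hcount, helem, hpair, hd1, hd2⟩ :=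
        ih (F \ D) hFcard' hdegF'
      have hF''F : F'' ⊆ F := hF''sub.trans Finset.sdiff_subset
      set stolen := D.filter (fun v => ∃ p ∈ C', G.Adj p.1 v) with hstolen
      have hstsub : stolen ⊆ D := Finset.filter_subset _ _
      -- degree of `a` into F \ D is zero
      have hano : ∀ v ∈ F \ D, ¬ G.Adj a v := by
        intro v hv hadj
        have hvF : v ∈ F := (Finset.mem_sdiff.mp hv).1
        exact (Finset.mem_sdiff.mp hv).2 (Finset.mem_filter.mpr ⟨hvF, hadj⟩)
      -- the key split of degrees over F = (F \ D) ∪ D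
      have hfilt : ∀ b : V, ((F.filter (G.Adj b)).card : ℝ)
          = (((F \ D).filter (G.Adj b)).card : ℝ) + ((D.filter (G.Adj b)).card : ℝ) := by
        intro b
        have hFu : (F \ D) ∪ D = F := Finset.sdiff_union_of_subset hDsubF
        have hdisjFD : Disjoint ((F \ D).filter (G.Adj b)) (D.filter (G.Adj b)) :=
          Finset.disjoint_filter_filter Finset.sdiff_disjoint
        have hsplitF : F.filter (G.Adj b) = (F \ D).filter (G.Adj b) ∪ D.filter (G.Adj b) := by
          rw [← Finset.filter_union, hFu]
        rw [hsplitF, Finset.card_union_of_disjoint hdisjFD]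
        push_cast; ring
      by_cases hacc : (stolen.card : ℝ) ≤ K/3
      · -- accept the pair (a, D \ stolen)
        refine ⟨(a, D \ stolen) :: C', r', Rej', F'',
          hF''F, hRejsub.trans Finset.sdiff_subset, hdegF'', ?_, ?_, ?_, ?_, ?_⟩
        · -- counting
          simp only [List.length_cons]
          push_cast
          linarith
        · -- per-element properties
          intro p hp
          rcases List.mem_cons.mp hp with hp | hp
          · subst hp
            refine ⟨haA, (Finset.sdiff_subset).trans hDsubF, ?_, ?_⟩
            · intro v hv
              have hvD : v ∈ D := (Finset.mem_sdiff.mp hv).1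
              exact (Finset.mem_filter.mp hvD).2
            · have hcardsd : ((D \ stolen).card : ℝ)
                  = (D.card : ℝ) - (stolen.card : ℝ) := by
                rw [Finset.card_sdiff_of_subset hstsub]
                have := Finset.card_le_card hstsub
                push_cast [Nat.cast_sub this]
                ring
              show K/3 < ((D \ stolen).card : ℝ)
              rw [hcardsd]; linarith
          · obtain ⟨h1, h2, h3, h4⟩ := helem p hp
            exact ⟨h1, h2.trans Finset.sdiff_subset, h3, h4⟩
        · -- pairwise
          refine List.pairwise_cons.mpr ⟨?_, hpair⟩
          intro q hq
          have hq2 := (helem q hq).2.1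
          refine ⟨?_, ?_, ?_, ?_⟩
          · -- a ≠ q.1
            intro heq
            have heq2 : a = q.1 := heq
            have hne : (D \ stolen).Nonempty := by
              rw [← Finset.card_pos]
              have hcardsd : ((D \ stolen).card : ℝ)
                  = (D.card : ℝ) - (stolen.card : ℝ) := by
                rw [Finset.card_sdiff_of_subset hstsub]
                have := Finset.card_le_card hstsub
                push_cast [Nat.cast_sub this]
                ring
              have : (0:ℝ) < ((D \ stolen).card : ℝ) := by rw [hcardsd]; linarith
              exact_mod_cast this
            obtain ⟨v, hv⟩ := hne
            have hvD : v ∈ D := (Finset.mem_sdiff.mp hv).1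
            have hvst : v ∉ stolen := (Finset.mem_sdiff.mp hv).2
            have hadj : G.Adj a v := (Finset.mem_filter.mp hvD).2
            exact hvst (Finset.mem_filter.mpr ⟨hvD, ⟨q, hq, heq2 ▸ hadj⟩⟩)
          · -- disjoint
            refine Finset.disjoint_left.mpr ?_
            intro v hv hv2
            have hvD : v ∈ D := (Finset.mem_sdiff.mp hv).1
            have := hq2 hv2
            exact (Finset.mem_sdiff.mp this).2 hvD
          · -- a has no neighbour in q.2
            intro v hv
            exact hano v (hq2 hv)
          · -- q.1 has no neighbour in D \ stolen
            intro v hv hadj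
            have hvD : v ∈ D := (Finset.mem_sdiff.mp hv).1
            have hvst : v ∉ stolen := (Finset.mem_sdiff.mp hv).2
            exact hvst (Finset.mem_filter.mpr ⟨hvD, ⟨q, hq, hadj⟩⟩)
        · -- d1
          intro p hp
          rcases List.mem_cons.mp hp with hp | hp
          · subst hp
            have hRa : Rej'.filter (G.Adj a) = ∅ := by
              rw [Finset.filter_eq_empty_iff]
              intro v hv
              exact hano v (hRejsub hv)
            show ((Rej'.filter (G.Adj a)).card : ℝ) + 2*K/3
                < ((F.filter (G.Adj a)).card : ℝ)
            rw [hRa]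
            simp only [Finset.card_empty, Nat.cast_zero]
            rw [← hDdef]
            linarith
          · have h1 := hd1 p hp
            have h2 : (((F \ D).filter (G.Adj p.1)).card : ℝ)
                ≤ ((F.filter (G.Adj p.1)).card : ℝ) := by
              exact_mod_cast Finset.card_le_card
                (Finset.filter_subset_filter _ Finset.sdiff_subset)
            linarith
        · -- d2
          simp only [List.map_cons, List.sum_cons]
          exact hd2.trans (le_add_of_nonneg_left (by positivity))
      · -- reject the pair
        push_neg at hacc
        have hRejF : Rej' ∪ D ⊆ F :=
          Finset.union_subset (hRejsub.trans Finset.sdiff_subset) hDsubF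
        have hRejD : Disjoint Rej' D := by
          refine Finset.disjoint_left.mpr ?_
          intro v hv hvD
          exact (Finset.mem_sdiff.mp (hRejsub hv)).2 hvD
        have hfiltRej : ∀ b : V, (((Rej' ∪ D).filter (G.Adj b)).card : ℝ)
            = ((Rej'.filter (G.Adj b)).card : ℝ) + ((D.filter (G.Adj b)).card : ℝ) := by
          intro b
          rw [Finset.filter_union, Finset.card_union_of_disjoint
            (Finset.disjoint_filter_filter hRejD)]
          push_cast; ring
        refine ⟨C', r' + 1, Rej' ∪ D, F'', hF''F, hRejF, hdegF'', ?_, ?_, hpair, ?_, ?_⟩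
        · -- counting
          push_cast
          linarith
        · -- per-element
          intro p hp
          obtain ⟨h1, h2, h3, h4⟩ := helem p hp
          exact ⟨h1, h2.trans Finset.sdiff_subset, h3, h4⟩
        · -- d1
          intro p hp
          have h1 := hd1 p hp
          rw [hfiltRej p.1, hfilt p.1]
          linarith
        · -- d2
          have hmapeq : C'.map (fun p => (((Rej' ∪ D).filter (G.Adj p.1)).card : ℝ))
              = C'.map (fun p => ((Rej'.filter (G.Adj p.1)).card : ℝ)
                + ((D.filter (G.Adj p.1)).card : ℝ)) := by
            apply List.map_congr_left
            intro p _
            exact hfiltRej p.1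
          rw [hmapeq, lsum_add]
          have hst := steal_le G C' D
          push_cast
          linarith
    · push_neg at hex
      refine ⟨[], 0, ∅, F, Finset.Subset.refl _, Finset.empty_subset _, hex, by simp,
        by simp, List.Pairwise.nil, by simp, by simp⟩

end Aux

set_option maxHeartbeats 1000000 in
lemma scale_lemma {V : Type*} [Fintype V] [DecidableEq V] (G : SimpleGraph V)
    [DecidableRel G.Adj] (A B : Finset V) (hdisj : Disjoint A B)
    (hnbr : ∀ b ∈ B, ∃ a ∈ A, G.Adj a b)
    (Γ d : ℝ) (hΓ : 0 < Γ) (hd : 0 < d) (hd1 : d < 1)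
    (hcomb : ¬ (∃ t : ℕ, 1 ≤ t ∧ ∃ a : Fin t → V, ∃ Bs : Fin t → Finset V,
        IsComb G (Γ * (t : ℝ) ^ (-(1 / d))) a Bs ∧
        (∀ i, a i ∈ A) ∧ (∀ i, Bs i ⊆ B)))
    (c : ℝ) (hc : c = 2 * (3:ℝ)^d * Γ^d / (1 - (2/3:ℝ)^(1-d))) :
    ∀ j : ℕ, ∀ K : ℝ, 0 < K → K < (3/2:ℝ)^j → ∀ F : Finset V, F ⊆ B →
      (∀ a ∈ A, ((F.filter (G.Adj a)).card : ℝ) ≤ K) →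
      (F.card : ℝ) ≤ c * K^(1-d) := by
  have hu : ((2:ℝ)/3)^(1-d) < 1 := Real.rpow_lt_one (by norm_num) (by norm_num) (by linarith)
  have hu0 : (0:ℝ) < ((2:ℝ)/3)^(1-d) := Real.rpow_pos_of_pos (by norm_num) _
  have h3d : (0:ℝ) < (3:ℝ)^d := Real.rpow_pos_of_pos (by norm_num) _
  have hΓd : (0:ℝ) < Γ^d := Real.rpow_pos_of_pos hΓ _
  have hc0 : 0 ≤ c := by
    rw [hc]
    apply div_nonneg (by positivity)
    linarith
  intro j
  induction j with
  | zero =>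
    intro K hK hK1 F hFB hdegF
    have hF : F = ∅ := by
      by_contra h
      obtain ⟨b, hb⟩ := Finset.nonempty_iff_ne_empty.mpr h
      obtain ⟨a, haA, hadj⟩ := hnbr b (hFB hb)
      have hmem : b ∈ F.filter (G.Adj a) := Finset.mem_filter.mpr ⟨hb, hadj⟩
      have h1 : (1:ℝ) ≤ ((F.filter (G.Adj a)).card : ℝ) := by
        exact_mod_cast Finset.card_pos.mpr ⟨b, hmem⟩
      have h2 := hdegF a haA
      simp only [pow_zero] at hK1
      linarith
    subst hF
    simp only [Finset.card_empty, Nat.cast_zero]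
    have := Real.rpow_nonneg hK.le (1-d)
    positivity
  | succ j ih =>
    intro K hK hK1 F hFB hdegF
    obtain ⟨C, r, Rej, F'', hF''F, hRejF, hdegF'', hcount, helem, hpair, hd1', hd2'⟩ :=
      band G A K hK F.card F le_rfl hdegF
    -- leftover bound
    have hK' : (0:ℝ) < 2*K/3 := by linarith
    have hK1' : 2*K/3 < (3/2:ℝ)^j := by
      have hps : ((3:ℝ)/2)^(j+1) = (3/2:ℝ)^j * (3/2) := pow_succ _ _
      nlinarith [pow_pos (by norm_num : (0:ℝ) < 3/2) j]
    have hF''bound : ((F''.card : ℝ)) ≤ c * (2*K/3)^(1-d) :=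
      ih (2*K/3) hK' hK1' F'' (hF''F.trans hFB) hdegF''
    -- key bound on (r + |C|) * K
    have hkey : ((r:ℝ) + C.length) * K ≤ 2 * (3:ℝ)^d * Γ^d * K^(1-d) := by
      have hKd : (0:ℝ) < K^(1-d) := Real.rpow_pos_of_pos hK _
      rcases Nat.eq_zero_or_pos C.length with hs0 | hs1
      · have hCnil : C = [] := List.length_eq_zero_iff.mp hs0
        subst hCnil
        simp only [List.map_nil, List.sum_nil] at hd2'
        have hr0 : (r:ℝ) = 0 := by
          have h1 : (0:ℝ) ≤ (r:ℝ) := Nat.cast_nonneg r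
          nlinarith
        have hpos : (0:ℝ) ≤ 2 * (3:ℝ)^d * Γ^d * K^(1-d) := by positivity
        simp only [List.length_nil, Nat.cast_zero]
        rw [hr0]
        linarith
      · -- each term in hd2' is at most K/3, so r ≤ |C|
        have hterm : ∀ x ∈ C.map (fun p => ((Rej.filter (G.Adj p.1)).card : ℝ)), x ≤ K/3 := by
          intro x hx
          obtain ⟨p, hp, rfl⟩ := List.mem_map.mp hx
          have h1 := hd1' p hp
          have h2 := hdegF p.1 (helem p hp).1
          linarith
        have hsum : (C.map (fun p => ((Rej.filter (G.Adj p.1)).card : ℝ))).sum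
            ≤ (C.length : ℝ) * (K/3) := by
          have := List.sum_le_card_nsmul
            (C.map (fun p => ((Rej.filter (G.Adj p.1)).card : ℝ))) (K/3) hterm
          simpa [nsmul_eq_mul] using this
        have hrs : (r:ℝ) ≤ (C.length : ℝ) := by
          have h1 : (r:ℝ) * (K/3) ≤ (C.length : ℝ) * (K/3) := le_trans hd2' hsum
          have hK3 : (0:ℝ) < K/3 := by linarith
          exact le_of_mul_le_mul_right h1 hK3
        -- no comb: hence |C| < (3Γ/K)^d
        have hs1' : 1 ≤ C.length := hs1
        have hcomb_fail : K/3 < Γ * ((C.length : ℕ) : ℝ)^(-(1/d)) := by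
          by_contra hle
          push_neg at hle
          apply hcomb
          have hmemC : ∀ i : Fin C.length, C.get i ∈ C := fun i => C.get_mem i
          refine ⟨C.length, hs1', fun i => (C.get i).1, fun i => (C.get i).2, ?_, ?_, ?_⟩
          · have hpg := List.pairwise_iff_get.mp hpair
            refine ⟨?_, ?_, ?_, ?_, ?_, ?_⟩
            · intro i j hij
              by_contra hne
              rcases Ne.lt_or_gt hne with h | h
              · exact (hpg i j h).1 hij
              · exact (hpg j i h).1 hij.symm
            · intro i j hne
              rcases Ne.lt_or_gt hne with h | h
              · exact (hpg i j h).2.1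
              · exact ((hpg j i h).2.1).symm
            · intro i j hmem
              have hAi := (helem _ (hmemC i)).1
              have hBj := (helem _ (hmemC j)).2.1
              exact Finset.disjoint_left.mp hdisj hAi (hFB (hBj hmem))
            · intro i v hv
              exact (helem _ (hmemC i)).2.2.1 v hv
            · intro i j hne v hv
              rcases Ne.lt_or_gt hne with h | h
              · exact (hpg i j h).2.2.1 v hv
              · exact (hpg j i h).2.2.2 v hv
            · intro i
              have h4 := (helem _ (hmemC i)).2.2.2
              linarith
          · intro i
            exact (helem _ (hmemC i)).1
          · intro i
            exact (helem _ (hmemC i)).2.1.trans hFB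
        have hs0R : (0:ℝ) < ((C.length : ℕ) : ℝ) := by exact_mod_cast hs1'
        have hy : (0:ℝ) < ((C.length : ℕ) : ℝ)^((1:ℝ)/d) := Real.rpow_pos_of_pos hs0R _
        have h1 : ((C.length : ℕ) : ℝ)^((1:ℝ)/d) < 3*Γ/K := by
          rw [Real.rpow_neg hs0R.le] at hcomb_fail
          have h2 : K/3 * ((C.length : ℕ) : ℝ)^((1:ℝ)/d) < Γ := by
            have h3 := mul_lt_mul_of_pos_right hcomb_fail hy
            rwa [mul_assoc, inv_mul_cancel₀ (ne_of_gt hy), mul_one] at h3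
          rw [lt_div_iff₀ hK]
          linarith
        have h2 : ((C.length : ℕ) : ℝ) < (3*Γ/K)^d := by
          have h3 : (((C.length : ℕ) : ℝ)^((1:ℝ)/d))^d < (3*Γ/K)^d :=
            Real.rpow_lt_rpow hy.le h1 hd
          rwa [← Real.rpow_mul hs0R.le, one_div, inv_mul_cancel₀ (ne_of_gt hd),
            Real.rpow_one] at h3
        have h4 : (3*Γ/K)^d * K = (3:ℝ)^d * Γ^d * K^(1-d) := by
          rw [Real.div_rpow (by positivity) hK.le,
            Real.mul_rpow (by norm_num : (0:ℝ) ≤ 3) hΓ.le,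
            Real.rpow_sub hK, Real.rpow_one]
          ring
        have h5 : ((r:ℝ) + C.length) * K ≤ (2 * (C.length : ℝ)) * K := by
          apply mul_le_mul_of_nonneg_right _ hK.le
          linarith
        have h6 : (2 * ((C.length : ℕ) : ℝ)) * K ≤ 2 * ((3*Γ/K)^d * K) := by
          nlinarith
        calc ((r:ℝ) + C.length) * K ≤ (2 * ((C.length : ℕ) : ℝ)) * K := h5
          _ ≤ 2 * ((3*Γ/K)^d * K) := h6
          _ = 2 * (3:ℝ)^d * Γ^d * K^(1-d) := by rw [h4]; ring
    -- combine
    have hprod : (2*K/3)^(1-d) = (2/3:ℝ)^(1-d) * K^(1-d) := by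
      rw [show 2*K/3 = (2/3) * K by ring,
        Real.mul_rpow (by norm_num : (0:ℝ) ≤ 2/3) hK.le]
    have hne0 : (1:ℝ) - (2/3:ℝ)^(1-d) ≠ 0 := by linarith
    have hcid : c * (1 - (2/3:ℝ)^(1-d)) = 2 * (3:ℝ)^d * Γ^d := by
      rw [hc, div_mul_cancel₀ _ hne0]
    have hκ : (0:ℝ) ≤ K^(1-d) := (Real.rpow_pos_of_pos hK _).le
    have hfinal : c * K^(1-d)
        = 2 * (3:ℝ)^d * Γ^d * K^(1-d) + c * ((2/3:ℝ)^(1-d) * K^(1-d)) := by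
      linear_combination (K^(1-d)) * hcid
    rw [hprod] at hF''bound
    linarith


set_option maxHeartbeats 1000000 in
/-- The bipartite lemma: if `(A, B)` is a bipartition of `G`, every vertex of `B` has a
neighbour in `A`, and every vertex of `A` has at most `Δ` neighbours in `B`, then either
there is a `(t, Γ t^{-1/d})`-comb in `(A, B)` for some `t ≥ 1`, or
`|B| ≤ (3^{d+1}/(3/2 - (3/2)^d)) Γ^d Δ^{1-d}`. -/
theorem stmt_6 {V : Type*} [Fintype V] [DecidableEq V] (G : SimpleGraph V)
    [DecidableRel G.Adj] (A B : Finset V)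
    (hcover : ∀ v : V, v ∈ A ∨ v ∈ B) (hdisj : Disjoint A B)
    (hbip : ∀ u v : V, G.Adj u v → (u ∈ A ∧ v ∈ B) ∨ (u ∈ B ∧ v ∈ A))
    (hnbr : ∀ b ∈ B, ∃ a ∈ A, G.Adj a b)
    (Γ Δ d : ℝ) (hΓ : 0 < Γ) (hΔ : 0 < Δ) (hd : 0 < d) (hd1 : d < 1)
    (hdeg : ∀ a ∈ A, ((B.filter (G.Adj a)).card : ℝ) ≤ Δ) :
    (∃ t : ℕ, 1 ≤ t ∧ ∃ a : Fin t → V, ∃ Bs : Fin t → Finset V,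
        IsComb G (Γ * (t : ℝ) ^ (-(1 / d))) a Bs ∧
        (∀ i, a i ∈ A) ∧ (∀ i, Bs i ⊆ B)) ∨
    (B.card : ℝ) ≤ 3 ^ (d + 1) / (3 / 2 - (3 / 2 : ℝ) ^ d) * Γ ^ d * Δ ^ (1 - d) := by
  by_cases hcomb : (∃ t : ℕ, 1 ≤ t ∧ ∃ a : Fin t → V, ∃ Bs : Fin t → Finset V,
      IsComb G (Γ * (t : ℝ) ^ (-(1 / d))) a Bs ∧
      (∀ i, a i ∈ A) ∧ (∀ i, Bs i ⊆ B))
  · exact Or.inl hcomb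
  right
  -- basic real facts
  have hu : ((2:ℝ)/3)^(1-d) < 1 := Real.rpow_lt_one (by norm_num) (by norm_num) (by linarith)
  have hu0 : (0:ℝ) < ((2:ℝ)/3)^(1-d) := Real.rpow_pos_of_pos (by norm_num) _
  obtain ⟨c, hc⟩ : ∃ c : ℝ, c = 2 * (3:ℝ)^d * Γ^d / (1 - (2/3:ℝ)^(1-d)) := ⟨_, rfl⟩
  have h3d : (0:ℝ) < (3:ℝ)^d := Real.rpow_pos_of_pos (by norm_num) _
  have hΓd : (0:ℝ) < Γ^d := Real.rpow_pos_of_pos hΓ _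
  have hc0 : 0 ≤ c := by
    rw [hc]
    apply div_nonneg (by positivity)
    linarith
  -- apply the scale induction at K = Δ
  obtain ⟨j, hj⟩ := pow_unbounded_of_one_lt Δ (by norm_num : (1:ℝ) < 3/2)
  have hB := scale_lemma G A B hdisj hnbr Γ d hΓ hd hd1 hcomb c hc j Δ hΔ hj B (Finset.Subset.refl B) hdeg
  -- identify the constant
  have h32 : ((3:ℝ)/2)^d = ((2/3:ℝ)^d)⁻¹ := by
    rw [show (3/2:ℝ) = (2/3:ℝ)⁻¹ by norm_num, Real.inv_rpow (by norm_num : (0:ℝ) ≤ 2/3)]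
  have h23 : ((2:ℝ)/3)^(1-d) = (2/3) * ((2/3:ℝ)^d)⁻¹ := by
    rw [show (1:ℝ)-d = 1 + (-d) by ring,
      Real.rpow_add (by norm_num : (0:ℝ) < 2/3), Real.rpow_one,
      Real.rpow_neg (by norm_num : (0:ℝ) ≤ 2/3)]
  have h3d1 : (3:ℝ)^(d+1) = (3:ℝ)^d * 3 := by
    rw [Real.rpow_add (by norm_num : (0:ℝ) < 3), Real.rpow_one]
  have hden : (3:ℝ)/2 - (3/2:ℝ)^d = (3/2) * (1 - (2/3:ℝ)^(1-d)) := by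
    rw [h32, h23]
    ring
  have hne : (1:ℝ) - (2/3:ℝ)^(1-d) ≠ 0 := by linarith
  have hcoef : (3:ℝ) ^ (d + 1) / (3 / 2 - (3 / 2 : ℝ) ^ d)
      = 2 * (3:ℝ)^d / (1 - (2/3:ℝ)^(1-d)) := by
    have hdp : (0:ℝ) < (3:ℝ)/2 - (3/2:ℝ)^d := by
      rw [hden]; nlinarith
    rw [hden, h3d1]
    rw [div_eq_div_iff (by rw [← hden]; exact hdp.ne') hne]
    ring
  have hceq : c * Δ^(1-d)
      = 3 ^ (d + 1) / (3 / 2 - (3 / 2 : ℝ) ^ d) * Γ ^ d * Δ ^ (1 - d) := by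
    rw [hcoef, hc]
    ring
  rw [← hceq]
  exact hB
end

section
/- Let 𝓑 = (B_1, …, B_t) be a pure blockade in a graph G whose pattern is a cograph. Then κ(G[B_1 ∪ ⋯ ∪ B_t]) ≥ Σ_{i=1}^{t} κ(G[B_i]). -/
open SimpleGraph

/-- `A` is complete to `B`: every vertex of `A` is adjacent to every vertex of `B`. -/
def CompleteTo {V : Type*} (G : SimpleGraph V) (A B : Finset V) : Prop :=
  ∀ a ∈ A, ∀ b ∈ B, G.Adj a b

/-- `A` is anticomplete to `B`: no vertex of `A` is adjacent to a vertex of `B`. -/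
def AnticompleteTo {V : Type*} (G : SimpleGraph V) (A B : Finset V) : Prop :=
  ∀ a ∈ A, ∀ b ∈ B, ¬ G.Adj a b

/-- The pattern of a pure blockade `(B 1, …, B t)`: the graph on `Fin t` in which `i, j`
are adjacent iff `i ≠ j` and `B i` is complete to `B j`. -/
def blockadePattern {V : Type*} (G : SimpleGraph V) {t : ℕ} (B : Fin t → Finset V) :
    SimpleGraph (Fin t) where
  Adj i j := i ≠ j ∧ CompleteTo G (B i) (B j)
  symm := by
    constructor
    rintro i j ⟨hij, h⟩
    exact ⟨hij.symm, fun a ha b hb => (h b hb a ha).symm⟩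
  loopless := ⟨fun i h => h.1 rfl⟩

set_option linter.unusedSectionVars false

open Finset

namespace SeinAux

variable {W : Type*} [DecidableEq W]

/-- P4-freeness in "six conditions" form. -/
def P4Free (H : SimpleGraph W) : Prop :=
  ∀ a b c d : W, H.Adj a b → H.Adj b c → H.Adj c d →
    ¬ H.Adj a c → ¬ H.Adj a d → ¬ H.Adj b d → False

lemma p4free_compl {H : SimpleGraph W} (h : P4Free H) : P4Free Hᶜ := by
  intro a b c d hab hbc hcd hac had hbd
  have eab : ¬ H.Adj a b := hab.2
  have ebc : ¬ H.Adj b c := hbc.2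
  have ecd : ¬ H.Adj c d := hcd.2
  have hnac : a ≠ c := by rintro rfl; exact had hcd
  have hnad : a ≠ d := by rintro rfl; exact hac hcd.symm
  have hnbd : b ≠ d := by rintro rfl; exact had hab
  have Hac : H.Adj a c := by by_contra h'; exact hac ⟨hnac, h'⟩
  have Had : H.Adj a d := by by_contra h'; exact had ⟨hnad, h'⟩
  have Hbd : H.Adj b d := by by_contra h'; exact hbd ⟨hnbd, h'⟩
  exact h c a d b Hac.symm Had Hbd.symm ecd (fun h' => ebc h'.symm) eab

/-- One step of a walk staying inside `S`. -/
def Step (H : SimpleGraph W) (S : Finset W) (x y : W) : Prop :=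
  x ∈ S ∧ y ∈ S ∧ H.Adj x y

/-- Reachability within `S`. -/
def Reach (H : SimpleGraph W) (S : Finset W) : W → W → Prop :=
  Relation.ReflTransGen (Step H S)

/-- `S` is connected inside `H`. -/
def ConnOn (H : SimpleGraph W) (S : Finset W) : Prop :=
  ∀ u ∈ S, ∀ v ∈ S, Reach H S u v

lemma anti_not_connOn {H : SimpleGraph W} {S1 S2 : Finset W}
    (h12 : ∀ a ∈ S1, ∀ b ∈ S2, ¬ H.Adj a b) (hd : Disjoint S1 S2)
    (h1 : S1.Nonempty) (h2 : S2.Nonempty) : ¬ ConnOn H (S1 ∪ S2) := by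
  obtain ⟨a, ha⟩ := h1
  obtain ⟨b, hb⟩ := h2
  intro hc
  have hr := hc a (mem_union_left _ ha) b (mem_union_right _ hb)
  have key : ∀ z, Reach H (S1 ∪ S2) a z → z ∈ S1 := by
    intro z hz
    induction hz with
    | refl => exact ha
    | tail _ hstep ih =>
        obtain ⟨hx, hy, hadj⟩ := hstep
        rcases mem_union.1 hy with h | h
        · exact h
        · exact absurd hadj (h12 _ ih _ h)
  exact (Finset.disjoint_left.1 hd (key b hr)) hb

lemma notConn_split {H : SimpleGraph W} {S : Finset W} (h : ¬ ConnOn H S) :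
    ∃ S1 S2 : Finset W, S1 ∪ S2 = S ∧ Disjoint S1 S2 ∧ S1.Nonempty ∧ S2.Nonempty ∧
      (∀ a ∈ S1, ∀ b ∈ S2, ¬ H.Adj a b) := by
  classical
  unfold ConnOn at h
  push_neg at h
  obtain ⟨u, hu, v, hv, hr⟩ := h
  refine ⟨S.filter (fun x => Reach H S u x), S.filter (fun x => ¬ Reach H S u x),
    Finset.filter_union_filter_not_eq _ S, Finset.disjoint_filter_filter_not S S _,
    ⟨u, ?_⟩, ⟨v, ?_⟩, ?_⟩
  · exact mem_filter.2 ⟨hu, Relation.ReflTransGen.refl⟩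
  · exact mem_filter.2 ⟨hv, hr⟩
  · intro a ha b hb hadj
    rw [mem_filter] at ha hb
    exact hb.2 (ha.2.tail ⟨ha.1, hb.1, hadj⟩)

lemma reach_cases {H : SimpleGraph W} {S : Finset W} {v z : W} (h : Reach H S v z) :
    z = v ∨ H.Adj v z ∨
      ∃ a b, a ∈ S ∧ b ∈ S ∧ b ≠ v ∧ H.Adj v a ∧ H.Adj a b ∧ ¬ H.Adj v b := by
  induction h with
  | refl => exact Or.inl rfl
  | @tail y z _ hstep ih =>
      obtain ⟨hyS, hzS, hadj⟩ := hstep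
      rcases ih with h | h | h
      · subst h; exact Or.inr (Or.inl hadj)
      · by_cases hvz : H.Adj v z
        · exact Or.inr (Or.inl hvz)
        · by_cases hzv : z = v
          · exact Or.inl hzv
          · exact Or.inr (Or.inr ⟨y, z, hyS, hzS, hzv, h, hadj, hvz⟩)
      · exact Or.inr (Or.inr h)

lemma reach_first {H : SimpleGraph W} {S : Finset W} {u v : W} (h : Reach H S u v) :
    u = v ∨ ∃ w ∈ S, H.Adj u w := by
  rcases h.cases_head with h | ⟨c, hc, _⟩
  · exact Or.inl h
  · exact Or.inr ⟨c, hc.2.1, hc.2.2⟩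

lemma anticase {H : SimpleGraph W} {S X Y : Finset W} {v : W}
    (hfree : P4Free H) (hc : ConnOn H S) (hcc : ConnOn Hᶜ S) (hv : v ∈ S)
    (hXY : X ∪ Y = S.erase v) (hd : Disjoint X Y) (hX : X.Nonempty) (hY : Y.Nonempty)
    (hanti : ∀ a ∈ X, ∀ b ∈ Y, ¬ H.Adj a b) : False := by
  classical
  have hXe : ∀ x ∈ X, x ≠ v ∧ x ∈ S := by
    intro x hx
    have : x ∈ S.erase v := hXY ▸ mem_union_left _ hx
    exact ⟨(mem_erase.1 this).1, (mem_erase.1 this).2⟩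
  have hYe : ∀ y ∈ Y, y ≠ v ∧ y ∈ S := by
    intro y hy
    have : y ∈ S.erase v := hXY ▸ mem_union_right _ hy
    exact ⟨(mem_erase.1 this).1, (mem_erase.1 this).2⟩
  -- v has a neighbor in X
  have hnx : ∃ x ∈ X, H.Adj v x := by
    by_contra h
    push_neg at h
    have hdis : Disjoint X (insert v Y) := by
      rw [Finset.disjoint_insert_right]
      exact ⟨fun hvX => (hXe v hvX).1 rfl, hd⟩
    have hun : X ∪ insert v Y = S := by
      rw [Finset.union_insert, hXY, Finset.insert_erase hv]
    refine anti_not_connOn (H := H) ?_ hdis hX ⟨v, mem_insert_self _ _⟩ (hun ▸ hc)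
    intro a ha b hb hadj
    rcases mem_insert.1 hb with rfl | hb'
    · exact h a ha hadj.symm
    · exact hanti a ha b hb' hadj
  have hny : ∃ y ∈ Y, H.Adj v y := by
    by_contra h
    push_neg at h
    have hdis : Disjoint (insert v X) Y := by
      rw [Finset.disjoint_insert_left]
      exact ⟨fun hvY => (hYe v hvY).1 rfl, hd⟩
    have hun : insert v X ∪ Y = S := by
      rw [Finset.insert_union, hXY, Finset.insert_erase hv]
    refine anti_not_connOn (H := H) ?_ hdis ⟨v, mem_insert_self _ _⟩ hY (hun ▸ hc)
    intro a ha b hb hadj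
    rcases mem_insert.1 ha with rfl | ha'
    · exact h b hb hadj
    · exact hanti a ha' b hb hadj
  obtain ⟨x0, hx0, hvx0⟩ := hnx
  obtain ⟨y0, hy0, hvy0⟩ := hny
  -- v is complete to S.erase v
  have hcomp : ∀ z ∈ S.erase v, H.Adj v z := by
    intro z hz
    by_contra hvz
    obtain ⟨hzv, hzS⟩ := mem_erase.1 hz
    rcases reach_cases (hc v hv z hzS) with h1 | h1 | h1
    · exact hzv h1
    · exact hvz h1
    · obtain ⟨a, b, haS, hbS, hbv, hva, hab, hvb⟩ := h1
      have haE : a ∈ X ∪ Y := by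
        rw [hXY]; exact mem_erase.2 ⟨hva.ne', haS⟩
      have hbE : b ∈ X ∪ Y := by
        rw [hXY]; exact mem_erase.2 ⟨hbv, hbS⟩
      rcases mem_union.1 hbE with hbX | hbY
      · have haX : a ∈ X := by
          rcases mem_union.1 haE with h' | h'
          · exact h'
          · exact absurd hab.symm (hanti b hbX a h')
        exact hfree b a v y0 hab.symm hva.symm hvy0
          (fun h' => hvb h'.symm) (hanti b hbX y0 hy0) (hanti a haX y0 hy0)
      · have haY : a ∈ Y := by
          rcases mem_union.1 haE with h' | h'
          · exact absurd hab (hanti a h' b hbY)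
          · exact h'
        exact hfree b a v x0 hab.symm hva.symm hvx0
          (fun h' => hvb h'.symm) (fun h' => hanti x0 hx0 b hbY h'.symm)
          (fun h' => hanti x0 hx0 a haY h'.symm)
  -- then S is not connected in Hᶜ
  have hun : {v} ∪ S.erase v = S := by
    rw [← Finset.insert_eq, Finset.insert_erase hv]
  refine anti_not_connOn (H := Hᶜ) ?_ ?_ ⟨v, mem_singleton_self v⟩ ?_ (hun ▸ hcc)
  · intro a ha b hb hadj
    rw [mem_singleton] at ha
    subst ha
    exact hadj.2 (hcomp b hb)
  · rw [Finset.disjoint_singleton_left]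
    exact fun h => (mem_erase.1 h).1 rfl
  · obtain ⟨x, hx⟩ := hX
    exact ⟨x, hXY ▸ mem_union_left _ hx⟩

lemma no_both {H : SimpleGraph W} (hfree : P4Free H) :
    ∀ n (S : Finset W), S.card ≤ n → 2 ≤ S.card → ConnOn H S → ConnOn Hᶜ S → False := by
  intro n
  induction n with
  | zero => intro S h h2 _ _; omega
  | succ n ih =>
    intro S hcard h2 hc hcc
    by_cases h3 : S.card = 2
    · obtain ⟨a, b, hab, rfl⟩ := Finset.card_eq_two.1 h3
      have ha : a ∈ ({a, b} : Finset W) := by simp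
      have hb : b ∈ ({a, b} : Finset W) := by simp
      have hAdj : H.Adj a b := by
        rcases reach_first (hc a ha b hb) with h | ⟨w, hw, hadj⟩
        · exact absurd h hab
        · rcases mem_insert.1 hw with rfl | hw'
          · exact absurd hadj H.irrefl
          · rw [mem_singleton] at hw'; subst hw'; exact hadj
      have hAdj' : Hᶜ.Adj a b := by
        rcases reach_first (hcc a ha b hb) with h | ⟨w, hw, hadj⟩
        · exact absurd h hab
        · rcases mem_insert.1 hw with rfl | hw'
          · exact absurd hadj Hᶜ.irrefl
          · rw [mem_singleton] at hw'; subst hw'; exact hadj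
      exact hAdj'.2 hAdj
    · have h3' : 3 ≤ S.card := by omega
      obtain ⟨v, hv⟩ : S.Nonempty := Finset.card_pos.1 (by omega)
      have hcS' : (S.erase v).card = S.card - 1 := Finset.card_erase_of_mem hv
      have hsplit : ∃ X Y : Finset W, X ∪ Y = S.erase v ∧ Disjoint X Y ∧
          X.Nonempty ∧ Y.Nonempty ∧
          ((∀ a ∈ X, ∀ b ∈ Y, ¬ H.Adj a b) ∨ (∀ a ∈ X, ∀ b ∈ Y, H.Adj a b)) := by
        by_cases c1 : ConnOn H (S.erase v)
        · by_cases c2 : ConnOn Hᶜ (S.erase v)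
          · exact (ih (S.erase v) (by omega) (by omega) c1 c2).elim
          · obtain ⟨X, Y, h1, h2', h3'', h4, h5⟩ := notConn_split c2
            refine ⟨X, Y, h1, h2', h3'', h4, Or.inr ?_⟩
            intro a haX b hbY
            have hne : a ≠ b := by
              rintro rfl
              exact (Finset.disjoint_left.1 h2' haX) hbY
            by_contra h'
            exact h5 a haX b hbY ⟨hne, h'⟩
        · obtain ⟨X, Y, h1, h2', h3'', h4, h5⟩ := notConn_split c1
          exact ⟨X, Y, h1, h2', h3'', h4, Or.inl h5⟩
      obtain ⟨X, Y, hXY, hd, hXne, hYne, hcase⟩ := hsplit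
      rcases hcase with h | h
      · exact anticase hfree hc hcc hv hXY hd hXne hYne h
      · refine anticase (H := Hᶜ) (p4free_compl hfree) hcc ?_ hv hXY hd hXne hYne ?_
        · rw [compl_compl]; exact hc
        · intro a ha b hb hadj
          exact hadj.2 (h a ha b hb)

lemma split_of_p4free {H : SimpleGraph W} (hfree : P4Free H) {S : Finset W}
    (h2 : 2 ≤ S.card) :
    ∃ S1 S2 : Finset W, S1 ∪ S2 = S ∧ Disjoint S1 S2 ∧ S1.Nonempty ∧ S2.Nonempty ∧
      ((∀ a ∈ S1, ∀ b ∈ S2, H.Adj a b) ∨ (∀ a ∈ S1, ∀ b ∈ S2, ¬ H.Adj a b)) := by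
  by_cases c1 : ConnOn H S
  · by_cases c2 : ConnOn Hᶜ S
    · exact (no_both hfree S.card S le_rfl h2 c1 c2).elim
    · obtain ⟨X, Y, h1, h2', h3, h4, h5⟩ := notConn_split c2
      refine ⟨X, Y, h1, h2', h3, h4, Or.inl ?_⟩
      intro a haX b hbY
      have hne : a ≠ b := by
        rintro rfl
        exact (Finset.disjoint_left.1 h2' haX) hbY
      by_contra h'
      exact h5 a haX b hbY ⟨hne, h'⟩
  · obtain ⟨X, Y, h1, h2', h3, h4, h5⟩ := notConn_split c1
    exact ⟨X, Y, h1, h2', h3, h4, Or.inr h5⟩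

end SeinAux

namespace KapAux

variable {V : Type*} [Fintype V] [DecidableEq V] (G : SimpleGraph V)

lemma induce_compl (X : Set V) : (G.induce X)ᶜ = Gᶜ.induce X := by
  ext a b
  simp only [compl_adj, comap_adj, Function.Embedding.coe_subtype, ne_eq, Subtype.ext_iff]

lemma clique_card_le {X s : Finset V} (hsX : s ⊆ X) (hc : G.IsClique (s : Set V)) :
    s.card ≤ (G.induce (X : Set V)).cliqueNum := by
  classical
  have hf : ∀ a : {x // x ∈ s}, (a : V) ∈ (X : Set V) := fun a => by
    simpa using hsX a.2
  let f : {x // x ∈ s} → {x // x ∈ (X : Set V)} := fun a => ⟨a.1, hf a⟩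
  have hinj : Function.Injective f := fun a b hab => Subtype.ext (congrArg (Subtype.val : {x // x ∈ (X : Set V)} → V) hab)
  have hclq : (G.induce (X : Set V)).IsClique
      ((s.attach.map ⟨f, hinj⟩ : Finset {x // x ∈ (X : Set V)}) : Set _) := by
    intro a ha b hb hab
    rw [Finset.coe_map] at ha hb
    obtain ⟨a', -, rfl⟩ := ha
    obtain ⟨b', -, rfl⟩ := hb
    have hne : (a' : V) ≠ (b' : V) := by
      intro h
      exact hab (congrArg _ (Subtype.ext h))
    exact hc a'.2 b'.2 hne
  have h1 := IsClique.card_le_cliqueNum (G := G.induce (X : Set V)) (tc := hclq)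
  simpa using h1

lemma exists_clique (X : Finset V) :
    ∃ s : Finset V, s ⊆ X ∧ G.IsClique (s : Set V) ∧
      s.card = (G.induce (X : Set V)).cliqueNum := by
  obtain ⟨T, hT⟩ := (G.induce (X : Set V)).exists_isNClique_cliqueNum
  refine ⟨T.map ⟨Subtype.val, Subtype.val_injective⟩, ?_, ?_, by rw [card_map]; exact hT.2⟩
  · intro x hx
    simp only [mem_map, Function.Embedding.coeFn_mk] at hx
    obtain ⟨a, _, rfl⟩ := hx
    simpa using a.2
  · intro a ha b hb hab
    simp only [coe_map, Set.mem_image, mem_coe, Function.Embedding.coeFn_mk] at ha hb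
    obtain ⟨a', ha', rfl⟩ := ha
    obtain ⟨b', hb', rfl⟩ := hb
    have hne : a' ≠ b' := fun h => hab (by rw [h])
    exact hT.1 ha' hb' hne

lemma omega_mono {X Y : Finset V} (h : X ⊆ Y) :
    (G.induce (X : Set V)).cliqueNum ≤ (G.induce (Y : Set V)).cliqueNum := by
  obtain ⟨s, hsX, hc, hcard⟩ := exists_clique G X
  rw [← hcard]
  exact clique_card_le G (hsX.trans h) hc

lemma omega_union_complete {X Y : Finset V} (hd : Disjoint X Y) (h : CompleteTo G X Y) :
    (G.induce (X : Set V)).cliqueNum + (G.induce (Y : Set V)).cliqueNum ≤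
      (G.induce ((X ∪ Y : Finset V) : Set V)).cliqueNum := by
  obtain ⟨sX, hX1, hX2, hX3⟩ := exists_clique G X
  obtain ⟨sY, hY1, hY2, hY3⟩ := exists_clique G Y
  rw [← hX3, ← hY3]
  have hdisj : Disjoint sX sY := hd.mono hX1 hY1
  have hsub : sX ∪ sY ⊆ X ∪ Y := union_subset_union hX1 hY1
  have hcl : G.IsClique ((sX ∪ sY : Finset V) : Set V) := by
    rw [coe_union]
    intro a ha b hb hab
    rcases ha with ha | ha <;> rcases hb with hb | hb
    · exact hX2 ha hb hab
    · exact h a (hX1 (mem_coe.1 ha)) b (hY1 (mem_coe.1 hb))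
    · exact (h b (hX1 (mem_coe.1 hb)) a (hY1 (mem_coe.1 ha))).symm
    · exact hY2 ha hb hab
  have := clique_card_le G hsub hcl
  rwa [card_union_of_disjoint hdisj] at this

lemma alpha_induce (X : Finset V) :
    alphaNum (G.induce (X : Set V)) = (Gᶜ.induce (X : Set V)).cliqueNum := by
  unfold alphaNum
  rw [induce_compl]

lemma kappa_compl (X : Finset V) :
    kappaNum (Gᶜ.induce (X : Set V)) = kappaNum (G.induce (X : Set V)) := by
  unfold kappaNum alphaNum omegaNum
  rw [induce_compl, induce_compl, compl_compl]
  exact Nat.mul_comm _ _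

lemma kappa_union_anticomplete {X Y : Finset V} (hd : Disjoint X Y)
    (h : AnticompleteTo G X Y) :
    kappaNum (G.induce (X : Set V)) + kappaNum (G.induce (Y : Set V)) ≤
      kappaNum (G.induce ((X ∪ Y : Finset V) : Set V)) := by
  have hcompl : CompleteTo Gᶜ X Y := by
    intro a ha b hb
    refine ⟨fun e => (Finset.disjoint_left.1 hd ha) (e ▸ hb), h a ha b hb⟩
  have hα : alphaNum (G.induce (X : Set V)) + alphaNum (G.induce (Y : Set V)) ≤
      alphaNum (G.induce ((X ∪ Y : Finset V) : Set V)) := by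
    rw [alpha_induce, alpha_induce, alpha_induce]
    exact omega_union_complete Gᶜ hd hcompl
  have hω1 : omegaNum (G.induce (X : Set V)) ≤
      omegaNum (G.induce ((X ∪ Y : Finset V) : Set V)) :=
    omega_mono G Finset.subset_union_left
  have hω2 : omegaNum (G.induce (Y : Set V)) ≤
      omegaNum (G.induce ((X ∪ Y : Finset V) : Set V)) :=
    omega_mono G Finset.subset_union_right
  unfold kappaNum
  calc alphaNum (G.induce (X : Set V)) * omegaNum (G.induce (X : Set V)) +
        alphaNum (G.induce (Y : Set V)) * omegaNum (G.induce (Y : Set V))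
      ≤ alphaNum (G.induce (X : Set V)) * omegaNum (G.induce ((X ∪ Y : Finset V) : Set V)) +
        alphaNum (G.induce (Y : Set V)) * omegaNum (G.induce ((X ∪ Y : Finset V) : Set V)) :=
        add_le_add (Nat.mul_le_mul le_rfl hω1) (Nat.mul_le_mul le_rfl hω2)
    _ = (alphaNum (G.induce (X : Set V)) + alphaNum (G.induce (Y : Set V))) *
        omegaNum (G.induce ((X ∪ Y : Finset V) : Set V)) := (add_mul _ _ _).symm
    _ ≤ alphaNum (G.induce ((X ∪ Y : Finset V) : Set V)) *
        omegaNum (G.induce ((X ∪ Y : Finset V) : Set V)) := Nat.mul_le_mul hα le_rfl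

lemma kappa_union_complete {X Y : Finset V} (hd : Disjoint X Y)
    (h : CompleteTo G X Y) :
    kappaNum (G.induce (X : Set V)) + kappaNum (G.induce (Y : Set V)) ≤
      kappaNum (G.induce ((X ∪ Y : Finset V) : Set V)) := by
  have hanti : AnticompleteTo Gᶜ X Y := by
    intro a ha b hb hadj
    exact hadj.2 (h a ha b hb)
  have := kappa_union_anticomplete Gᶜ hd hanti
  rwa [kappa_compl, kappa_compl, kappa_compl] at this

end KapAux

section Main

variable {V : Type*} [Fintype V] [DecidableEq V] (G : SimpleGraph V)

open KapAux

lemma p4free_pattern {t : ℕ} (B : Fin t → Finset V)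
    (hcograph : ¬ Nonempty (pathGraph 4 ↪g blockadePattern G B)) :
    SeinAux.P4Free (blockadePattern G B) := by
  intro a b c d hab hbc hcd hac had hbd
  have h1 : a ≠ b := (blockadePattern G B).ne_of_adj hab
  have h2 : b ≠ c := (blockadePattern G B).ne_of_adj hbc
  have h3 : c ≠ d := (blockadePattern G B).ne_of_adj hcd
  have h4 : a ≠ c := by rintro rfl; exact had hcd
  have h5 : a ≠ d := by rintro rfl; exact hac hcd.symm
  have h6 : b ≠ d := by rintro rfl; exact had hab
  have hba := hab.symm; have hcb := hbc.symm; have hdc := hcd.symm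
  have hca : ¬ (blockadePattern G B).Adj c a := fun h => hac h.symm
  have hda : ¬ (blockadePattern G B).Adj d a := fun h => had h.symm
  have hdb : ¬ (blockadePattern G B).Adj d b := fun h => hbd h.symm
  apply hcograph
  refine ⟨⟨⟨![a, b, c, d], ?_⟩, ?_⟩⟩
  · intro i j hij
    fin_cases i <;> fin_cases j <;>
      simp_all [Matrix.cons_val_zero, Matrix.cons_val_one, Matrix.head_cons,
        Matrix.cons_val_two, Matrix.tail_cons, Matrix.cons_val_three]
  · intro i j
    fin_cases i <;> fin_cases j <;>
      simp [pathGraph_adj, Function.Embedding.coeFn_mk, Matrix.cons_val_zero, Matrix.cons_val_one, Matrix.head_cons,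
        Matrix.cons_val_two, Matrix.tail_cons, Matrix.cons_val_three,
        hab, hbc, hcd, hac, had, hbd, hba, hcb, hdc, hca, hda, hdb] <;>
      assumption

lemma main_ind {t : ℕ} (B : Fin t → Finset V)
    (hdisj : Pairwise (Function.onFun Disjoint B))
    (hpure : ∀ i j, i ≠ j → CompleteTo G (B i) (B j) ∨ AnticompleteTo G (B i) (B j))
    (hfree : SeinAux.P4Free (blockadePattern G B)) :
    ∀ (n : ℕ) (S : Finset (Fin t)), S.card ≤ n →
      ∑ i ∈ S, kappaNum (G.induce (B i : Set V)) ≤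
        kappaNum (G.induce ((S.biUnion B : Finset V) : Set V)) := by
  intro n
  induction n with
  | zero =>
      intro S hS
      obtain rfl : S = ∅ := Finset.card_eq_zero.1 (Nat.le_zero.1 hS)
      simp
  | succ n ih =>
      intro S hS
      by_cases h1 : S.card ≤ 1
      · rcases Nat.le_one_iff_eq_zero_or_eq_one.1 h1 with h0 | h0
        · obtain rfl : S = ∅ := Finset.card_eq_zero.1 h0
          simp
        · obtain ⟨i, rfl⟩ := Finset.card_eq_one.1 h0
          rw [Finset.sum_singleton, Finset.singleton_biUnion]
      · have h2 : 2 ≤ S.card := by omega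
        obtain ⟨S1, S2, hun, hd, hS1, hS2, hcase⟩ := SeinAux.split_of_p4free hfree h2
        have hcards : S1.card + S2.card = S.card := by
          rw [← hun]; exact (Finset.card_union_of_disjoint hd).symm
        have hc1 : S1.card ≤ n := by
          have := Finset.card_pos.2 hS2; omega
        have hc2 : S2.card ≤ n := by
          have := Finset.card_pos.2 hS1; omega
        have key1 := ih S1 hc1
        have key2 := ih S2 hc2
        have hdU : Disjoint (S1.biUnion B) (S2.biUnion B) := by
          rw [Finset.disjoint_biUnion_left]
          intro i hi
          rw [Finset.disjoint_biUnion_right]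
          intro j hj
          exact hdisj (fun e => (Finset.disjoint_left.1 hd hi) (e ▸ hj))
        have hunU : S1.biUnion B ∪ S2.biUnion B = S.biUnion B := by
          rw [← hun]
          ext x
          simp only [Finset.mem_union, Finset.mem_biUnion]
          constructor
          · rintro (⟨i, hi, hx⟩ | ⟨i, hi, hx⟩)
            · exact ⟨i, Or.inl hi, hx⟩
            · exact ⟨i, Or.inr hi, hx⟩
          · rintro ⟨i, hi | hi, hx⟩
            · exact Or.inl ⟨i, hi, hx⟩
            · exact Or.inr ⟨i, hi, hx⟩
        have hsum : ∑ i ∈ S, kappaNum (G.induce (B i : Set V)) =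
            ∑ i ∈ S1, kappaNum (G.induce (B i : Set V)) +
              ∑ i ∈ S2, kappaNum (G.induce (B i : Set V)) := by
          rw [← hun, Finset.sum_union hd]
        rw [hsum, ← hunU]
        rcases hcase with h | h
        · have hcomp : CompleteTo G (S1.biUnion B) (S2.biUnion B) := by
            intro a ha b hb
            rw [Finset.mem_biUnion] at ha hb
            obtain ⟨i, hi, hai⟩ := ha
            obtain ⟨j, hj, hbj⟩ := hb
            exact (h i hi j hj).2 a hai b hbj
          exact le_trans (add_le_add key1 key2) (kappa_union_complete G hdU hcomp)
        · have hanti : AnticompleteTo G (S1.biUnion B) (S2.biUnion B) := by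
            intro a ha b hb
            rw [Finset.mem_biUnion] at ha hb
            obtain ⟨i, hi, hai⟩ := ha
            obtain ⟨j, hj, hbj⟩ := hb
            have hij : i ≠ j := fun e => (Finset.disjoint_left.1 hd hi) (e ▸ hj)
            rcases hpure i j hij with hcc | haa
            · exact absurd ⟨hij, hcc⟩ (h i hi j hj)
            · exact haa a hai b hbj
          exact le_trans (add_le_add key1 key2) (kappa_union_anticomplete G hdU hanti)

end Main

/-- If `(B 1, …, B t)` is a pure blockade with a cograph pattern then
`κ(G[B 1 ∪ ⋯ ∪ B t]) ≥ Σ_i κ(G[B i])`. -/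
theorem stmt_10 {V : Type*} [Fintype V] [DecidableEq V] (G : SimpleGraph V)
    (t : ℕ) (B : Fin t → Finset V)
    (hdisj : Pairwise (Function.onFun Disjoint B))
    (hpure : ∀ i j, i ≠ j → CompleteTo G (B i) (B j) ∨ AnticompleteTo G (B i) (B j))
    (hcograph : ¬ Nonempty (pathGraph 4 ↪g blockadePattern G B)) :
    ∑ i, kappaNum (G.induce (B i : Set V)) ≤
      kappaNum (G.induce ((Finset.univ.biUnion B : Finset V) : Set V)) :=
  main_ind G B hdisj hpure (p4free_pattern G B hcograph)
    (Finset.univ.card) Finset.univ le_rfl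
end

section
/- Let τ > 0 be real and let G be a τ-critical graph. Then for every integer t > 0, there is no pure blockade (B_1, …, B_t) in G whose pattern is a cograph, of length t and of width at least |G|·t^{−1/τ}, with B_i ≠ V(G) for each i. -/
set_option linter.unusedSectionVars false

open SimpleGraph

/-- A graph `G` is `τ`-critical if `κ(G) < |G|^τ` but every proper induced subgraph `G'`
satisfies `κ(G') ≥ |G'|^τ`. -/
def TauCritical {V : Type*} [Fintype V] (τ : ℝ) (G : SimpleGraph V) : Prop :=
  (kappaNum G : ℝ) < (Fintype.card V : ℝ) ^ τ ∧
  ∀ X : Finset V, X ≠ Finset.univ →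
    (X.card : ℝ) ^ τ ≤ (kappaNum (G.induce (X : Set V)) : ℝ)

section Aux
variable {α : Type*}

/-- An induced four-vertex path within `A` for the relation `R`. -/
def P4In (R : α → α → Prop) (A : Finset α) : Prop :=
  ∃ a b c d, a ∈ A ∧ b ∈ A ∧ c ∈ A ∧ d ∈ A ∧
    R a b ∧ R b c ∧ R c d ∧ ¬ R a c ∧ ¬ R b d ∧ ¬ R a d

lemma p4_distinct {R : α → α → Prop} (hs : Symmetric R) (hi : ∀ a, ¬ R a a) {a b c d : α}
    (hab : R a b) (hbc : R b c) (hcd : R c d) (hac : ¬ R a c) (hbd : ¬ R b d)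
    (had : ¬ R a d) :
    a ≠ b ∧ a ≠ c ∧ a ≠ d ∧ b ≠ c ∧ b ≠ d ∧ c ≠ d := by
  refine ⟨?_, ?_, ?_, ?_, ?_, ?_⟩ <;> rintro rfl
  · exact hi a hab
  · exact had hcd
  · exact hac (hs hcd)
  · exact hi b hbc
  · exact had hab
  · exact hi c hcd

lemma P4In_compl {R : α → α → Prop} (hs : Symmetric R) {A : Finset α}
    (h : P4In (fun x y => x ≠ y ∧ ¬ R x y) A) : P4In R A := by
  obtain ⟨a, b, c, d, ha, hb, hc, hd, hab, hbc, hcd, hac, hbd, had⟩ := h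
  have hs' : Symmetric (fun x y : α => x ≠ y ∧ ¬ R x y) :=
    fun x y ⟨h1, h2⟩ => ⟨h1.symm, fun hr => h2 (hs hr)⟩
  have hi' : ∀ x : α, ¬ (x ≠ x ∧ ¬ R x x) := fun x h => h.1 rfl
  obtain ⟨nab, nac, nad, nbc, nbd, ncd⟩ := p4_distinct hs' hi' hab hbc hcd hac hbd had
  have rac : R a c := by by_contra h; exact hac ⟨nac, h⟩
  have rbd : R b d := by by_contra h; exact hbd ⟨nbd, h⟩
  have rad : R a d := by by_contra h; exact had ⟨nad, h⟩
  exact ⟨c, a, d, b, hc, ha, hd, hb, hs rac, rad, hs rbd, fun h => hcd.2 h,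
    fun h => hab.2 h, fun h => hbc.2 (hs h)⟩

/-- Reachability inside `A` via `R`. -/
def ReachIn (R : α → α → Prop) (A : Finset α) : α → α → Prop :=
  Relation.ReflTransGen (fun a b => a ∈ A ∧ b ∈ A ∧ R a b)

lemma ReachIn.symm {R : α → α → Prop} (hs : Symmetric R) {A : Finset α} :
    Symmetric (ReachIn R A) :=
  fun _ _ h => by
    induction h with
    | refl => exact Relation.ReflTransGen.refl
    | tail _ hst ih => exact Relation.ReflTransGen.head ⟨hst.2.1, hst.1, hs hst.2.2⟩ ih

lemma reach_mem_of_closed {R : α → α → Prop} {A X : Finset α}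
    (hX : ∀ x ∈ X, ∀ y ∈ A, y ∉ X → ¬ R x y) {x u : α} (hx : x ∈ X)
    (h : ReachIn R A x u) : u ∈ X := by
  induction h with
  | refl => exact hx
  | tail _ hstep ih =>
    by_contra hu
    exact hX _ ih _ hstep.2.1 hu hstep.2.2

lemma reach_boundary {R : α → α → Prop} {A : Finset α} {v z : α} (hz : ¬ R v z) :
    ∀ {p}, ReachIn R A z p → R v p →
    ∃ a c, ReachIn R A z c ∧ a ∈ A ∧ c ∈ A ∧ R c a ∧ R v a ∧ ¬ R v c := by
  intro p hzp
  induction hzp with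
  | refl => exact fun hp => absurd hp hz
  | @tail b p hzb hbp ih =>
    intro hp
    by_cases hb : R v b
    · exact ih hb
    · exact ⟨p, b, hzb, hbp.2.1, hbp.1, hbp.2.2, hp, hb⟩

lemma seinsche_step [DecidableEq α] {R : α → α → Prop} (hsymm : Symmetric R) {A : Finset α} {v : α}
    (hv : v ∈ A) (hnp : ¬ P4In R A)
    (hne : (A.erase v).Nonempty)
    (hdisc : ∃ x₀ ∈ A.erase v, ∃ y₀ ∈ A.erase v, ¬ ReachIn R (A.erase v) x₀ y₀) :
    ∃ X : Finset α, X ⊆ A ∧ X.Nonempty ∧ X ≠ A ∧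
      ((∀ x ∈ X, ∀ y ∈ A, y ∉ X → R x y) ∨ (∀ x ∈ X, ∀ y ∈ A, y ∉ X → ¬ R x y)) := by
  classical
  set A' := A.erase v with hA'
  have hA'A : A' ⊆ A := Finset.erase_subset _ _
  by_cases hcase : ∃ z ∈ A', ∀ u ∈ A', ReachIn R A' z u → ¬ R v u
  · obtain ⟨z, hzA, hzanti⟩ := hcase
    refine ⟨A'.filter (fun u => ReachIn R A' z u), ?_, ⟨z, ?_⟩, ?_, Or.inr ?_⟩
    · exact fun x hx => hA'A (Finset.mem_filter.mp hx).1
    · exact Finset.mem_filter.mpr ⟨hzA, Relation.ReflTransGen.refl⟩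
    · intro hXA
      have : v ∈ A'.filter (fun u => ReachIn R A' z u) := hXA ▸ hv
      exact (Finset.notMem_erase v A) (Finset.mem_filter.mp this).1
    · intro x hx y hy hynX
      obtain ⟨hxA', hreach⟩ := Finset.mem_filter.mp hx
      by_cases hyv : y = v
      · subst hyv
        exact fun hr => hzanti x hxA' hreach (hsymm hr)
      · have hyA' : y ∈ A' := Finset.mem_erase.mpr ⟨hyv, hy⟩
        intro hr
        exact hynX (Finset.mem_filter.mpr ⟨hyA', hreach.tail ⟨hxA', hyA', hr⟩⟩)
  · push_neg at hcase
    -- v is complete to A'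
    have hcomp : ∀ z ∈ A', R v z := by
      intro z hzA
      by_contra hz
      obtain ⟨u, huA, hreach, hvu⟩ := hcase z hzA
      obtain ⟨a, c, hzc, haA, hcA, hca, hva, hvc⟩ := reach_boundary hz hreach hvu
      have hza : ReachIn R A' z a := hzc.tail ⟨hcA, haA, hca⟩
      -- find a vertex not reachable from z
      obtain ⟨x₀, hx₀, y₀, hy₀, hxy⟩ := hdisc
      have hw : ∃ w ∈ A', ¬ ReachIn R A' z w := by
        by_contra hall
        push_neg at hall
        exact hxy (((ReachIn.symm hsymm) (hall x₀ hx₀)).trans (hall y₀ hy₀))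
      obtain ⟨w, hwA, hzw⟩ := hw
      obtain ⟨q, hqA, hwq, hvq⟩ := hcase w hwA
      have hzq : ¬ ReachIn R A' z q := fun h =>
        hzw (h.trans ((ReachIn.symm hsymm) hwq))
      have hqa : ¬ R q a := fun h => hzq (hza.tail ⟨haA, hqA, hsymm h⟩)
      have hqc : ¬ R q c := fun h => hzq (hzc.tail ⟨hcA, hqA, hsymm h⟩)
      exact hnp ⟨q, v, a, c, hA'A hqA, hv, hA'A haA, hA'A hcA,
        hsymm hvq, hva, hsymm hca, hqa, hvc, hqc⟩
    obtain ⟨z₀, hz₀⟩ := hne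
    refine ⟨{v}, Finset.singleton_subset_iff.mpr hv, Finset.singleton_nonempty v, ?_, Or.inl ?_⟩
    · intro h
      have : z₀ ∈ ({v} : Finset α) := h ▸ hA'A hz₀
      exact (Finset.mem_erase.mp hz₀).1 (Finset.mem_singleton.mp this)
    · intro x hx y hy hynX
      rcases Finset.mem_singleton.mp hx with rfl
      exact hcomp y (Finset.mem_erase.mpr ⟨fun h => hynX (h ▸ hx), hy⟩)


end Aux

section Aux2
variable {α : Type*} [DecidableEq α]

lemma P4In_mono {R : α → α → Prop} {A B : Finset α} (hAB : A ⊆ B) (h : P4In R A) :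
    P4In R B := by
  obtain ⟨a, b, c, d, ha, hb, hc, hd, h5⟩ := h
  exact ⟨a, b, c, d, hAB ha, hAB hb, hAB hc, hAB hd, h5⟩

lemma seinsche {R : α → α → Prop} (hsymm : Symmetric R) (hirr : ∀ a, ¬ R a a) :
    ∀ (n : ℕ) (A : Finset α), A.card = n → 2 ≤ A.card → ¬ P4In R A →
    ∃ X : Finset α, X ⊆ A ∧ X.Nonempty ∧ X ≠ A ∧
      ((∀ x ∈ X, ∀ y ∈ A, y ∉ X → R x y) ∨ (∀ x ∈ X, ∀ y ∈ A, y ∉ X → ¬ R x y)) := by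
  intro n
  induction n using Nat.strong_induction_on with
  | _ n ih =>
    intro A hcard h2 hnp
    rcases eq_or_lt_of_le h2 with heq | hlt
    · -- |A| = 2
      obtain ⟨a, b, hab, rfl⟩ := Finset.card_eq_two.mp heq.symm
      refine ⟨{a}, ?_, Finset.singleton_nonempty a, ?_, ?_⟩
      · exact Finset.singleton_subset_iff.mpr (Finset.mem_insert_self a _)
      · intro h
        have : b ∈ ({a} : Finset α) := h ▸ Finset.mem_insert_of_mem (Finset.mem_singleton_self b)
        exact hab (Finset.mem_singleton.mp this).symm
      · by_cases hr : R a b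
        · left
          intro x hx y hy hynX
          rcases Finset.mem_singleton.mp hx with rfl
          rcases Finset.mem_insert.mp hy with rfl | hy'
          · exact absurd hx hynX
          · rcases Finset.mem_singleton.mp hy' with rfl; exact hr
        · right
          intro x hx y hy hynX
          rcases Finset.mem_singleton.mp hx with rfl
          rcases Finset.mem_insert.mp hy with rfl | hy'
          · exact absurd hx hynX
          · rcases Finset.mem_singleton.mp hy' with rfl; exact hr
    · -- |A| ≥ 3
      obtain ⟨v, hv⟩ := Finset.card_pos.mp (by omega : 0 < A.card)
      set A' := A.erase v with hA'
      have hA'A : A' ⊆ A := Finset.erase_subset _ _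
      have hcA' : A'.card = A.card - 1 := Finset.card_erase_of_mem hv
      have h2' : 2 ≤ A'.card := by omega
      have hnp' : ¬ P4In R A' := fun h => hnp (P4In_mono hA'A h)
      obtain ⟨X, hXA', hXne, hXneq, hsplit⟩ :=
        ih A'.card (by omega) A' rfl h2' hnp'
      have hYne : ∃ y₀ ∈ A', y₀ ∉ X := by
        by_contra hall
        push_neg at hall
        exact hXneq (Finset.Subset.antisymm hXA' hall)
      obtain ⟨y₀, hy₀A, hy₀X⟩ := hYne
      obtain ⟨x₀, hx₀X⟩ := hXne
      have hne' : A'.Nonempty := ⟨y₀, hy₀A⟩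
      rcases hsplit with hcompl | hanti
      · -- complete split of A': work in the complement relation
        set R' := fun x y : α => x ≠ y ∧ ¬ R x y with hR'
        have hsymm' : Symmetric R' := fun x y ⟨h1, h2⟩ => ⟨h1.symm, fun hr => h2 (hsymm hr)⟩
        have hnpc : ¬ P4In R' A := fun h => hnp (P4In_compl hsymm h)
        have hXanti : ∀ x ∈ X, ∀ y ∈ A', y ∉ X → ¬ R' x y := by
          intro x hx y hy hynX hr'
          exact hr'.2 (hcompl x hx y hy hynX)
        have hdisc : ∃ a ∈ A', ∃ b ∈ A', ¬ ReachIn R' A' a b :=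
          ⟨x₀, hXA' hx₀X, y₀, hy₀A, fun h => hy₀X (reach_mem_of_closed hXanti hx₀X h)⟩
        obtain ⟨Z, hZA, hZne, hZneq, hZsplit⟩ := seinsche_step hsymm' hv hnpc hne' hdisc
        refine ⟨Z, hZA, hZne, hZneq, ?_⟩
        rcases hZsplit with h1 | h2
        · exact Or.inr fun x hx y hy hynZ => (h1 x hx y hy hynZ).2
        · refine Or.inl fun x hx y hy hynZ => ?_
          have hxy : x ≠ y := fun h => hynZ (h ▸ hx)
          by_contra hr
          exact h2 x hx y hy hynZ ⟨hxy, hr⟩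
      · -- anticomplete split of A'
        have hdisc : ∃ a ∈ A', ∃ b ∈ A', ¬ ReachIn R A' a b :=
          ⟨x₀, hXA' hx₀X, y₀, hy₀A, fun h => hy₀X (reach_mem_of_closed hanti hx₀X h)⟩
        exact seinsche_step hsymm hv hnp hne' hdisc


end Aux2

lemma p4_embedding {α : Type*} (H : SimpleGraph α) {a b c d : α}
    (hab : H.Adj a b) (hbc : H.Adj b c) (hcd : H.Adj c d)
    (hac : ¬ H.Adj a c) (hbd : ¬ H.Adj b d) (had : ¬ H.Adj a d) :
    Nonempty (pathGraph 4 ↪g H) := by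
  obtain ⟨nab, nac, nad, nbc, nbd, ncd⟩ :=
    p4_distinct (R := H.Adj) (fun _ _ h => h.symm) (fun _ => H.irrefl) hab hbc hcd hac hbd had
  refine ⟨⟨⟨![a, b, c, d], ?_⟩, ?_⟩⟩
  · intro i j hij
    fin_cases i <;> fin_cases j <;>
      simp_all [Matrix.cons_val_zero, Matrix.cons_val_one, Matrix.head_cons]
  · intro i j
    change H.Adj (![a, b, c, d] i) (![a, b, c, d] j) ↔ (pathGraph 4).Adj i j
    fin_cases i <;> fin_cases j <;>
      simp_all [pathGraph_adj, Matrix.cons_val_zero, Matrix.cons_val_one, Matrix.head_cons,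
        H.adj_comm, hab.symm, hbc.symm, hcd.symm] <;> decide

lemma exists_stable_clique {V : Type*} [Fintype V] [DecidableEq V] (G : SimpleGraph V)
    (Bi : Finset V) :
    ∃ S K : Finset V, S ⊆ Bi ∧ K ⊆ Bi ∧
      (∀ x ∈ S, ∀ y ∈ S, x ≠ y → ¬ G.Adj x y) ∧
      (∀ x ∈ K, ∀ y ∈ K, x ≠ y → G.Adj x y) ∧
      S.card * K.card = kappaNum (G.induce (Bi : Set V)) := by
  classical
  set Gi := G.induce (Bi : Set V) with hGi
  obtain ⟨k, hk⟩ := Gi.exists_isNClique_cliqueNum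
  obtain ⟨s, hs⟩ := Giᶜ.exists_isNClique_cliqueNum
  refine ⟨s.map (Function.Embedding.subtype _), k.map (Function.Embedding.subtype _),
    ?_, ?_, ?_, ?_, ?_⟩
  · intro x hx
    obtain ⟨y, _, rfl⟩ := Finset.mem_map.mp hx
    exact y.2
  · intro x hx
    obtain ⟨y, _, rfl⟩ := Finset.mem_map.mp hx
    exact y.2
  · intro x hx y hy hxy
    obtain ⟨x', hx', rfl⟩ := Finset.mem_map.mp hx
    obtain ⟨y', hy', rfl⟩ := Finset.mem_map.mp hy
    have hne : x' ≠ y' := fun h => hxy (by rw [h])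
    have := hs.1 (Finset.mem_coe.mpr hx') (Finset.mem_coe.mpr hy') hne
    rw [compl_adj] at this
    exact fun hadj => this.2 hadj
  · intro x hx y hy hxy
    obtain ⟨x', hx', rfl⟩ := Finset.mem_map.mp hx
    obtain ⟨y', hy', rfl⟩ := Finset.mem_map.mp hy
    have hne : x' ≠ y' := fun h => hxy (by rw [h])
    exact hk.1 (Finset.mem_coe.mpr hx') (Finset.mem_coe.mpr hy') hne
  · rw [Finset.card_map, Finset.card_map, hs.2, hk.2]
    rfl


lemma blockade_main {V : Type*} [DecidableEq V] (G : SimpleGraph V) {t : ℕ}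
    (B : Fin t → Finset V)
    (hdisj : Pairwise (Function.onFun Disjoint B))
    (hpure : ∀ i j, i ≠ j → CompleteTo G (B i) (B j) ∨ AnticompleteTo G (B i) (B j))
    (hnp : ¬ P4In (blockadePattern G B).Adj Finset.univ)
    (S K : Fin t → Finset V)
    (hSsub : ∀ i, S i ⊆ B i) (hSstab : ∀ i, ∀ x ∈ S i, ∀ y ∈ S i, x ≠ y → ¬ G.Adj x y)
    (hKsub : ∀ i, K i ⊆ B i) (hKcl : ∀ i, ∀ x ∈ K i, ∀ y ∈ K i, x ≠ y → G.Adj x y) :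
    ∀ (n : ℕ) (I : Finset (Fin t)), I.card = n → I.Nonempty →
    ∃ S' K' : Finset V,
      (∀ x ∈ S', ∃ i ∈ I, x ∈ B i) ∧ (∀ x ∈ K', ∃ i ∈ I, x ∈ B i) ∧
      (∀ x ∈ S', ∀ y ∈ S', x ≠ y → ¬ G.Adj x y) ∧
      (∀ x ∈ K', ∀ y ∈ K', x ≠ y → G.Adj x y) ∧
      (∑ i ∈ I, (S i).card * (K i).card) ≤ S'.card * K'.card := by
  intro n
  induction n using Nat.strong_induction_on with
  | _ n ih =>
    intro I hcard hne
    rcases Nat.lt_or_ge I.card 2 with hlt | h2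
    · -- singleton
      obtain ⟨i, rfl⟩ := Finset.card_eq_one.mp
        (le_antisymm (by omega) (Finset.card_pos.mpr hne))
      refine ⟨S i, K i, ?_, ?_, hSstab i, hKcl i, ?_⟩
      · exact fun x hx => ⟨i, Finset.mem_singleton_self i, hSsub i hx⟩
      · exact fun x hx => ⟨i, Finset.mem_singleton_self i, hKsub i hx⟩
      · rw [Finset.sum_singleton]
    · -- split
      have hsymm : Symmetric (blockadePattern G B).Adj := fun _ _ h => h.symm
      have hnpI : ¬ P4In (blockadePattern G B).Adj I :=
        fun h => hnp (P4In_mono (Finset.subset_univ I) h)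
      obtain ⟨X, hXI, hXne, hXneq, hsplit⟩ := seinsche hsymm (fun _ => (blockadePattern G B).irrefl) I.card I rfl h2 hnpI
      set Y := I \ X with hY
      have hYne : Y.Nonempty := by
        rw [Finset.sdiff_nonempty]
        intro hIX
        exact hXneq (Finset.Subset.antisymm hXI hIX)
      have hXY : Disjoint X Y := Finset.disjoint_sdiff
      have hXcard : X.card < n := hcard ▸ Finset.card_lt_card (Finset.ssubset_iff_subset_ne.mpr ⟨hXI, hXneq⟩)
      have hYcard : Y.card < n := by
        have e1 : Y.card = I.card - X.card := Finset.card_sdiff_of_subset hXI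
        have e2 : 0 < X.card := Finset.card_pos.mpr hXne
        have e3 : X.card ≤ I.card := Finset.card_le_card hXI
        omega
      obtain ⟨S1, K1, hS1m, hK1m, hS1s, hK1c, hsum1⟩ := ih X.card hXcard X rfl hXne
      obtain ⟨S2, K2, hS2m, hK2m, hS2s, hK2c, hsum2⟩ := ih Y.card hYcard Y rfl hYne
      -- cross index facts
      have hmemI : ∀ {x : V}, (∃ i ∈ X, x ∈ B i) → ∃ i ∈ I, x ∈ B i :=
        fun ⟨i, hi, hx⟩ => ⟨i, hXI hi, hx⟩
      have hmemI' : ∀ {x : V}, (∃ i ∈ Y, x ∈ B i) → ∃ i ∈ I, x ∈ B i :=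
        fun ⟨i, hi, hx⟩ => ⟨i, (Finset.sdiff_subset) hi, hx⟩
      have hsumsplit : (∑ i ∈ I, (S i).card * (K i).card)
          = (∑ i ∈ X, (S i).card * (K i).card) + (∑ i ∈ Y, (S i).card * (K i).card) := by
        rw [← Finset.sum_sdiff hXI]; ring
      -- disjointness of vertex sets across X and Y
      have hvdisj : ∀ {x : V}, (∃ i ∈ X, x ∈ B i) → (∃ j ∈ Y, x ∈ B j) → False := by
        rintro x ⟨i, hi, hxi⟩ ⟨j, hj, hxj⟩
        have hij : i ≠ j := fun h => (Finset.mem_sdiff.mp hj).2 (h ▸ hi)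
        exact Finset.disjoint_left.mp (hdisj hij) hxi hxj
      rcases hsplit with hcompl | hanti
      · -- pattern-complete across: union the cliques
        have hcross : ∀ i ∈ X, ∀ j ∈ Y, CompleteTo G (B i) (B j) := by
          intro i hi j hj
          exact (show i ≠ j ∧ CompleteTo G (B i) (B j) from hcompl i hi j (Finset.mem_sdiff.mp hj).1 (Finset.mem_sdiff.mp hj).2).2
        have hK12 : Disjoint K1 K2 := Finset.disjoint_left.mpr
          (fun {x} hx hy => hvdisj (hK1m x hx) (hK2m x hy))
        refine ⟨if S1.card ≤ S2.card then S2 else S1, K1 ∪ K2, ?_, ?_, ?_, ?_, ?_⟩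
        · split <;> intro x hx
          · exact hmemI' (hS2m x hx)
          · exact hmemI (hS1m x hx)
        · intro x hx
          rcases Finset.mem_union.mp hx with h | h
          · exact hmemI (hK1m x h)
          · exact hmemI' (hK2m x h)
        · split
          · exact hS2s
          · exact hS1s
        · intro x hx y hy hxy
          rcases Finset.mem_union.mp hx with h1 | h1 <;> rcases Finset.mem_union.mp hy with h2 | h2
          · exact hK1c x h1 y h2 hxy
          · obtain ⟨i, hi, hxi⟩ := hK1m x h1
            obtain ⟨j, hj, hyj⟩ := hK2m y h2
            exact hcross i hi j hj x hxi y hyj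
          · obtain ⟨i, hi, hxi⟩ := hK2m x h1
            obtain ⟨j, hj, hyj⟩ := hK1m y h2
            exact (hcross j hj i hi y hyj x hxi).symm
          · exact hK2c x h1 y h2 hxy
        · rw [Finset.card_union_of_disjoint hK12, hsumsplit]
          split
          · next h =>
            calc _ ≤ S2.card * K1.card + S2.card * K2.card :=
                  Nat.add_le_add (hsum1.trans (Nat.mul_le_mul_right _ h)) hsum2
              _ = S2.card * (K1.card + K2.card) := by ring
          · next h =>
            push_neg at h
            calc _ ≤ S1.card * K1.card + S1.card * K2.card :=
                  Nat.add_le_add hsum1 (hsum2.trans (Nat.mul_le_mul_right _ h.le))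
              _ = S1.card * (K1.card + K2.card) := by ring
      · -- pattern-anticomplete across: union the stable sets
        have hcross : ∀ i ∈ X, ∀ j ∈ Y, AnticompleteTo G (B i) (B j) := by
          intro i hi j hj
          have hij : i ≠ j := fun h => (Finset.mem_sdiff.mp hj).2 (h ▸ hi)
          rcases hpure i j hij with hc | ha
          · exact absurd (show (blockadePattern G B).Adj i j from ⟨hij, hc⟩) (hanti i hi j (Finset.mem_sdiff.mp hj).1 (Finset.mem_sdiff.mp hj).2)
          · exact ha
        have hS12 : Disjoint S1 S2 := Finset.disjoint_left.mpr
          (fun {x} hx hy => hvdisj (hS1m x hx) (hS2m x hy))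
        refine ⟨S1 ∪ S2, if K1.card ≤ K2.card then K2 else K1, ?_, ?_, ?_, ?_, ?_⟩
        · intro x hx
          rcases Finset.mem_union.mp hx with h | h
          · exact hmemI (hS1m x h)
          · exact hmemI' (hS2m x h)
        · split <;> intro x hx
          · exact hmemI' (hK2m x hx)
          · exact hmemI (hK1m x hx)
        · intro x hx y hy hxy
          rcases Finset.mem_union.mp hx with h1 | h1 <;> rcases Finset.mem_union.mp hy with h2 | h2
          · exact hS1s x h1 y h2 hxy
          · obtain ⟨i, hi, hxi⟩ := hS1m x h1
            obtain ⟨j, hj, hyj⟩ := hS2m y h2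
            exact hcross i hi j hj x hxi y hyj
          · obtain ⟨i, hi, hxi⟩ := hS2m x h1
            obtain ⟨j, hj, hyj⟩ := hS1m y h2
            exact fun hadj => hcross j hj i hi y hyj x hxi hadj.symm
          · exact hS2s x h1 y h2 hxy
        · split
          · exact hK2c
          · exact hK1c
        · rw [Finset.card_union_of_disjoint hS12, hsumsplit]
          split
          · next h =>
            calc _ ≤ S1.card * K2.card + S2.card * K2.card :=
                  Nat.add_le_add (hsum1.trans (Nat.mul_le_mul_left _ h)) hsum2
              _ = (S1.card + S2.card) * K2.card := by ring
          · next h =>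
            push_neg at h
            calc _ ≤ S1.card * K1.card + S2.card * K1.card :=
                  Nat.add_le_add hsum1 (hsum2.trans (Nat.mul_le_mul_left _ h.le))
              _ = (S1.card + S2.card) * K1.card := by ring


/-- In a `τ`-critical graph there is no pure blockade with a cograph pattern of length `t`
and width at least `|G| t^{-1/τ}` with every block a proper subset of `V(G)`. -/
theorem stmt_11 {V : Type*} [Fintype V] [DecidableEq V] (G : SimpleGraph V)
    (τ : ℝ) (hτ : 0 < τ) (hG : TauCritical τ G) (t : ℕ) (ht : 0 < t) :
    ¬ ∃ B : Fin t → Finset V,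
        Pairwise (Function.onFun Disjoint B) ∧
        (∀ i j, i ≠ j → CompleteTo G (B i) (B j) ∨ AnticompleteTo G (B i) (B j)) ∧
        ¬ Nonempty (pathGraph 4 ↪g blockadePattern G B) ∧
        (∀ i, (Fintype.card V : ℝ) * (t : ℝ) ^ (-(1 / τ)) ≤ ((B i).card : ℝ)) ∧
        (∀ i, B i ≠ Finset.univ) := by
  rintro ⟨B, hdisj, hpure, hnp4, hwidth, hproper⟩
  classical
  have hnp : ¬ P4In (blockadePattern G B).Adj Finset.univ := by
    rintro ⟨a, b, c, d, -, -, -, -, hab, hbc, hcd, hac, hbd, had⟩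
    exact hnp4 (p4_embedding _ hab hbc hcd hac hbd had)
  choose S K hSsub hKsub hSstab hKcl hcardSK using fun i => exists_stable_clique G (B i)
  have huniv : (Finset.univ : Finset (Fin t)).Nonempty := ⟨⟨0, ht⟩, Finset.mem_univ _⟩
  obtain ⟨S', K', _, _, hS's, hK'c, hsum⟩ :=
    blockade_main G B hdisj hpure hnp S K hSsub hSstab hKsub hKcl
      Finset.univ.card Finset.univ rfl huniv
  have hS'le : S'.card ≤ alphaNum G := by
    have hcl : Gᶜ.IsClique ↑S' := by
      intro x hx y hy hxy
      exact (compl_adj G x y).mpr ⟨hxy, hS's x hx y hy hxy⟩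
    exact SimpleGraph.IsClique.card_le_cliqueNum (tc := hcl)
  have hK'le : K'.card ≤ omegaNum G := by
    have hcl : G.IsClique ↑K' := fun x hx y hy hxy => hK'c x hx y hy hxy
    exact SimpleGraph.IsClique.card_le_cliqueNum (tc := hcl)
  have hκ : (∑ i : Fin t, kappaNum (G.induce ((B i : Set V)))) ≤ kappaNum G := by
    calc ∑ i : Fin t, kappaNum (G.induce ((B i : Set V)))
        = ∑ i : Fin t, (S i).card * (K i).card :=
          Finset.sum_congr rfl (fun i _ => (hcardSK i).symm)
      _ ≤ S'.card * K'.card := hsum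
      _ ≤ alphaNum G * omegaNum G := Nat.mul_le_mul hS'le hK'le
  set n := Fintype.card V with hn
  have ht0 : (0:ℝ) < (t:ℝ) := by exact_mod_cast ht
  have hb0 : (0:ℝ) ≤ (n:ℝ) * (t:ℝ) ^ (-(1/τ)) :=
    mul_nonneg (Nat.cast_nonneg n) (Real.rpow_nonneg ht0.le _)
  have hkey : ((n:ℝ) * (t:ℝ) ^ (-(1/τ))) ^ τ = (n:ℝ) ^ τ * ((t:ℝ))⁻¹ := by
    rw [Real.mul_rpow (Nat.cast_nonneg n) (Real.rpow_nonneg ht0.le _),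
        ← Real.rpow_mul ht0.le]
    congr 1
    rw [neg_mul, one_div, inv_mul_cancel₀ hτ.ne', Real.rpow_neg_one]
  have hsumreal : (n:ℝ) ^ τ ≤ ∑ i : Fin t, (kappaNum (G.induce ((B i : Set V))) : ℝ) := by
    calc (n:ℝ) ^ τ = ∑ _i : Fin t, ((n:ℝ) * (t:ℝ) ^ (-(1/τ))) ^ τ := by
          rw [Finset.sum_const, Finset.card_univ, Fintype.card_fin, nsmul_eq_mul, hkey]
          field_simp
      _ ≤ _ := Finset.sum_le_sum (fun i _ =>
          le_trans (Real.rpow_le_rpow hb0 (hwidth i) hτ.le) (hG.2 (B i) (hproper i)))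
  have hfin : (n:ℝ) ^ τ ≤ (kappaNum G : ℝ) := by
    refine hsumreal.trans ?_
    rw [← Nat.cast_sum]
    exact_mod_cast hκ
  exact absurd hG.1 (not_lt.mpr hfin)
end
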